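/- Let g be a Lorentzian inner product of signature (-,+,...,+) on V, dim V = d+1, with orthonormal pair T (g(T,T)=-1), N (g(N,N)=1, g(T,N)=0), α > 0, δ > 0, u = T + δN, and B(v,w) = -g(N,u)g(v,w) + g(N,v)g(u,w) + g(u,v)g(N,w). Then the symmetric bilinear form B on V has signature (1,d), i.e. it is negative definite on a d-dimensional subspace and positive definite on a 1-dimensional subspace, provided 0 < δ < 1. -/

import Mathlib

lemma aux_cs (d : ℕ) (a x : Fin (d+1) → ℝ)
    (ha : (∑ i : Fin d, a i.succ ^ 2) < a 0 ^ 2)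
    (hortho : a 0 * x 0 = ∑ i : Fin d, a i.succ * x i.succ)
    (hx : x ≠ 0) : x 0 ^ 2 < ∑ i : Fin d, x i.succ ^ 2 := by
  have hS : (0:ℝ) ≤ ∑ i : Fin d, x i.succ ^ 2 :=
    Finset.sum_nonneg fun i _ => sq_nonneg _
  have ha0 : a 0 ^ 2 > 0 := lt_of_le_of_lt (Finset.sum_nonneg fun i _ => sq_nonneg _) ha
  rcases eq_or_lt_of_le hS with h0 | hpos
  · exfalso
    have hz : ∀ i : Fin d, x i.succ = 0 := by
      intro i
      have := (Finset.sum_eq_zero_iff_of_nonneg (fun i _ => sq_nonneg (x i.succ))).1 h0.symm i (Finset.mem_univ i)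
      exact pow_eq_zero_iff (by norm_num) |>.1 this
    have hx0 : x 0 = 0 := by
      have : a 0 * x 0 = 0 := by
        rw [hortho]; exact Finset.sum_eq_zero fun i _ => by rw [hz i, mul_zero]
      rcases mul_eq_zero.1 this with h | h
      · exact absurd (by rw [h]; ring) (ne_of_gt ha0)
      · exact h
    apply hx
    funext i
    refine Fin.cases hx0 hz i
  · have hcs : (∑ i : Fin d, a i.succ * x i.succ) ^ 2 ≤
        (∑ i : Fin d, a i.succ ^ 2) * ∑ i : Fin d, x i.succ ^ 2 := by
      exact Finset.sum_mul_sq_le_sq_mul_sq Finset.univ _ _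
    have h1 : a 0 ^ 2 * x 0 ^ 2 < a 0 ^ 2 * ∑ i : Fin d, x i.succ ^ 2 := by
      calc a 0 ^ 2 * x 0 ^ 2 = (a 0 * x 0) ^ 2 := by ring
        _ = (∑ i : Fin d, a i.succ * x i.succ) ^ 2 := by rw [hortho]
        _ ≤ (∑ i : Fin d, a i.succ ^ 2) * ∑ i : Fin d, x i.succ ^ 2 := hcs
        _ < a 0 ^ 2 * ∑ i : Fin d, x i.succ ^ 2 := by
            exact mul_lt_mul_of_pos_right ha hpos
    exact lt_of_mul_lt_mul_left h1 (le_of_lt ha0)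

theorem stmt6 (d : ℕ) (hd : 1 ≤ d)
    (V : Type*) [AddCommGroup V] [Module ℝ V]
    (g : V →ₗ[ℝ] V →ₗ[ℝ] ℝ) (hg : ∀ v w, g v w = g w v)
    (b : Module.Basis (Fin (d + 1)) ℝ V)
    (hsig : ∀ i j : Fin (d + 1),
      g (b i) (b j) = if i = j then (if i = 0 then (-1 : ℝ) else 1) else 0)
    (T N : V) (hT : g T T = -1) (hN : g N N = 1) (hTN : g T N = 0)
    (α δ : ℝ) (hα : 0 < α) (hδ0 : 0 < δ) (hδ1 : δ < 1)
    (u : V) (hu : u = T + δ • N)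
    (B : V → V → ℝ)
    (hB : ∀ v w, B v w = -(g N u) * g v w + g N v * g u w + g u v * g N w) :
    ∃ P Q : Submodule ℝ V,
      Module.finrank ℝ Q = 1 ∧ Module.finrank ℝ P = d ∧
      (∀ v ∈ P, v ≠ 0 → B v v < 0) ∧ (∀ v ∈ Q, v ≠ 0 → 0 < B v v) := by
  have hNT : g N T = 0 := (hg N T).trans hTN
  have hNu : g N u = δ := by rw [hu]; simp [hNT, hN]
  have huN : g u N = δ := by rw [hu]; simp [hTN, hN]
  have huu : g u u = δ ^ 2 - 1 := by
    rw [hu]; simp [hT, hTN, hNT, hN]; ring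
  -- expansion of g in coordinates
  have hexp : ∀ v w : V, g v w =
      ∑ i : Fin (d+1), (if i = 0 then (-1:ℝ) else 1) * (b.repr v i * b.repr w i) := by
    intro v w
    conv_lhs => rw [← b.sum_repr v, ← b.sum_repr w]
    simp only [map_sum, map_smul, LinearMap.sum_apply, LinearMap.smul_apply, smul_eq_mul, hsig]
    refine Finset.sum_congr rfl fun i _ => ?_
    rw [Finset.sum_eq_single i]
    · rw [if_pos rfl]; split <;> ring
    · intro j _ hj; simp [hj]
    · simp
  -- key positivity on u-orthogonal complement
  have hkey : ∀ v : V, g u v = 0 → v ≠ 0 → 0 < g v v := by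
    intro v hov hv
    set a : Fin (d+1) → ℝ := fun i => b.repr u i with ha
    set x : Fin (d+1) → ℝ := fun i => b.repr v i with hxdef
    have sumsplit : ∀ y z : V,
        g y z = -(b.repr y 0 * b.repr z 0) +
          ∑ i : Fin d, b.repr y i.succ * b.repr z i.succ := by
      intro y z
      rw [hexp, Fin.sum_univ_succ]
      simp [Fin.succ_ne_zero]
    have hux : a 0 * x 0 = ∑ i : Fin d, a i.succ * x i.succ := by
      have := sumsplit u v
      rw [hov] at this
      linarith [this]
    have haa : (∑ i : Fin d, a i.succ ^ 2) < a 0 ^ 2 := by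
      have := sumsplit u u
      rw [huu] at this
      have hδ2 : δ ^ 2 - 1 < 0 := by nlinarith
      have hsq : ∀ i : Fin d, a i.succ * a i.succ = a i.succ ^ 2 := fun i => (sq (a i.succ)).symm
      change δ ^ 2 - 1 = -(a 0 * a 0) + ∑ i : Fin d, a i.succ * a i.succ at this
      simp only [hsq] at this
      nlinarith [this]
    have hxne : x ≠ 0 := by
      intro h
      apply hv
      have : b.repr v = 0 := by
        ext i; exact congrFun h i
      simpa using congrArg b.repr.symm this
    have := aux_cs d a x haa hux hxne
    have h2 := sumsplit v v
    have hsq : ∀ i : Fin d, x i.succ * x i.succ = x i.succ ^ 2 := fun i => (sq (x i.succ)).symm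
    change g v v = -(x 0 * x 0) + ∑ i : Fin d, x i.succ * x i.succ at h2
    simp only [hsq] at h2
    nlinarith [h2, this]
  have : FiniteDimensional ℝ V := Module.Finite.of_basis b
  have hfr : Module.finrank ℝ V = d + 1 := by
    rw [Module.finrank_eq_card_basis b, Fintype.card_fin]
  have hgu_ne : g u ≠ 0 := by
    intro h
    have : g u u = 0 := by rw [h]; rfl
    rw [huu] at this; nlinarith
  refine ⟨LinearMap.ker (g u), Submodule.span ℝ {N}, ?_, ?_, ?_, ?_⟩
  · rw [finrank_span_singleton]
    intro h
    rw [h] at hN; simp at hN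
  · have hrange : LinearMap.range (g u) = ⊤ :=
      LinearMap.range_eq_top.2 (LinearMap.surjective_of_ne_zero hgu_ne)
    have := LinearMap.finrank_range_add_finrank_ker (g u)
    rw [hrange, hfr] at this
    simp [Module.finrank_self] at this
    omega
  · intro v hv hvne
    have hov : g u v = 0 := hv
    have hNv0 : g v v > 0 := hkey v hov hvne
    rw [hB, hNu, hov]
    have hgvN : g v N = g N v := hg v N
    nlinarith [hNv0]
  · intro v hv hvne
    rcases Submodule.mem_span_singleton.1 hv with ⟨t, rfl⟩
    have ht : t ≠ 0 := by
      intro h; apply hvne; rw [h, zero_smul]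
    rw [hB]
    simp only [map_smul, LinearMap.smul_apply, smul_eq_mul, hNu, hN, huN]
    have ht2 : 0 < t ^ 2 := by positivity
    nlinarith [mul_pos hδ0 ht2]
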